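/- Let Q ⊣ i be an adjunction between categories with weak equivalences, with i identity on objects, such that i creates weak equivalences and each component of the counit ε is a weak equivalence. Then the class W_λ is uniquely determined: it must equal { f : Q f ∈ W_τ }. -/
import Mathlib

open CategoryTheory

/-- If `i` creates weak equivalences and each component of the
counit `ε` is a weak equivalence, then the class `Wl` is uniquely determined:
`Wl = Q⁻¹(Wt)` on morphisms. -/
theorem Wl_unique
    {Ct : Type*} [Category Ct] {Cl : Type*} [Category Cl]
    (Q : Cl ⥤ Ct) (i : Ct ⥤ Cl) (adj : Q ⊣ i)
    (Wt : MorphismProperty Ct) (Wl : MorphismProperty Cl)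
    (hWtiso : ∀ {X Y : Ct} (f : X ⟶ Y), IsIso f → Wt f)
    (hWliso : ∀ {X Y : Cl} (f : X ⟶ Y), IsIso f → Wl f)
    [Wt.HasTwoOutOfThreeProperty] [Wl.HasTwoOutOfThreeProperty]
    (hObj : Function.Surjective i.obj)
    (hCreate : ∀ {X Y : Ct} (f : X ⟶ Y), Wt f ↔ Wl (i.map f))
    (hCounit : ∀ A : Ct, Wt (adj.counit.app A)) :
    Wl = Wt.inverseImage Q := by
  -- Every unit component is in Wl.
  have hUnit : ∀ X : Cl, Wl (adj.unit.app X) := by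
    intro X
    obtain ⟨A, rfl⟩ := hObj X
    have h1 : Wl (i.map (adj.counit.app A)) := (hCreate _).1 (hCounit A)
    have h2 : Wl (adj.unit.app (i.obj A) ≫ i.map (adj.counit.app A)) := by
      rw [adj.right_triangle_components]
      exact hWliso _ (IsIso.id _)
    exact Wl.of_postcomp _ _ h1 h2
  ext X Y f
  have nat : f ≫ adj.unit.app Y = adj.unit.app X ≫ i.map (Q.map f) :=
    adj.unit.naturality f
  constructor
  · intro hf
    have : Wl (adj.unit.app X ≫ i.map (Q.map f)) := by
      rw [← nat]; exact Wl.comp_mem _ _ hf (hUnit Y)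
    exact (hCreate _).2 (Wl.of_precomp _ _ (hUnit X) this)
  · intro hf
    have : Wl (f ≫ adj.unit.app Y) := by
      rw [nat]; exact Wl.comp_mem _ _ (hUnit X) ((hCreate _).1 hf)
    exact Wl.of_postcomp _ _ (hUnit Y) this
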